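/- For all integers n ≥ 1 and k with 0 ≤ k ≤ ⌊(n−1)/2⌋, the minimum forcing number of the graph H_k equals n − k − 1, i.e., f(H_k) = n − k − 1. -/

import Mathlib

open SimpleGraph

/-- `M` is a perfect matching of the simple graph `G`, viewed as a set of edges:
the edges of `M` are pairwise disjoint edges of `G` covering every vertex. -/
def IsPM {V : Type*} (G : SimpleGraph V) (M : Set (Sym2 V)) : Prop :=
  M ⊆ G.edgeSet ∧
  (∀ e ∈ M, ∀ f ∈ M, e ≠ f → ∀ v : V, v ∈ e → v ∉ f) ∧
  (∀ v : V, ∃ e ∈ M, v ∈ e)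

/-- `S` is a forcing set of the perfect matching `M` of `G`:
`S ⊆ M` and `M` is the unique perfect matching of `G` containing `S`. -/
def IsForcingSet {V : Type*} (G : SimpleGraph V) (M S : Set (Sym2 V)) : Prop :=
  S ⊆ M ∧ ∀ M', IsPM G M' → S ⊆ M' → M' = M

/-- The forcing number `f(G,M)`: smallest cardinality of a forcing set of `M`. -/
noncomputable def forcingNum {V : Type*} (G : SimpleGraph V) (M : Set (Sym2 V)) : ℕ :=
  sInf {k | ∃ S, IsForcingSet G M S ∧ S.ncard = k}

/-- The minimum forcing number `f(G)`. -/
noncomputable def minForcing {V : Type*} (G : SimpleGraph V) : ℕ :=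
  sInf {k | ∃ M, IsPM G M ∧ forcingNum G M = k}

/-- The maximum forcing number `F(G)`. -/
noncomputable def maxForcing {V : Type*} (G : SimpleGraph V) : ℕ :=
  sSup {k | ∃ M, IsPM G M ∧ forcingNum G M = k}

/-- Vertex connectivity `κ(G)`: least size of a set of vertices whose deletion
disconnects the graph or leaves at most one vertex. -/
noncomputable def vertexConn {V : Type*} (G : SimpleGraph V) : ℕ :=
  sInf {k | ∃ X : Set V, X.ncard = k ∧ (¬ (G.induce Xᶜ).Connected ∨ Xᶜ.ncard ≤ 1)}

/-- Edge connectivity `λ(G)`: least size of a set of edges whose deletion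
disconnects the graph. -/
noncomputable def edgeConn {V : Type*} (G : SimpleGraph V) : ℕ :=
  sInf {k | ∃ F : Set (Sym2 V), F ⊆ G.edgeSet ∧ F.ncard = k ∧ ¬ (G.deleteEdges F).Connected}

/-- `G` is `l`-extendable: `G` is connected, has at least `2l+2` vertices, has a
perfect matching, and every matching of size `l` extends to a perfect matching. -/
def IsExtendable {V : Type*} [Fintype V] (G : SimpleGraph V) (l : ℕ) : Prop :=
  G.Connected ∧ 2 * l + 2 ≤ Fintype.card V ∧ (∃ M, IsPM G M) ∧
    ∀ N : Set (Sym2 V), N ⊆ G.edgeSet →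
      (∀ e ∈ N, ∀ f ∈ N, e ≠ f → ∀ v : V, v ∈ e → v ∉ f) → N.ncard = l →
      ∃ M, IsPM G M ∧ N ⊆ M

/-- `G` is factor-critical: deleting any vertex leaves a graph with a perfect matching. -/
def IsFactorCritical {V : Type*} (G : SimpleGraph V) : Prop :=
  ∀ v : V, ∃ M, IsPM (G.induce {v}ᶜ) M

/-- `o(G)`: the number of connected components of odd order. -/
noncomputable def oddComponents {V : Type*} (G : SimpleGraph V) : ℕ :=
  {c : G.ConnectedComponent | Odd c.supp.ncard}.ncard

/-- `G` belongs to `𝒦_{n,n}⁺`: it is obtained from `K_{n,n}` by adding edges inside one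
partite set; equivalently there is an independent set `A` of size `n` all of whose
vertices are adjacent to all vertices outside `A`. -/
def InKnnPlus {V : Type*} (n : ℕ) (G : SimpleGraph V) : Prop :=
  ∃ A : Set V, A.ncard = n ∧ (∀ a ∈ A, ∀ b ∈ A, ¬ G.Adj a b) ∧
    ∀ a ∈ A, ∀ b ∉ A, G.Adj a b

/-- `M` is a perfect matching of the subgraph of `G` induced by the vertex set `T`. -/
def IsPMOn {V : Type*} (G : SimpleGraph V) (T : Set V) (M : Set (Sym2 V)) : Prop :=
  M ⊆ G.edgeSet ∧ (∀ e ∈ M, ∀ w : V, w ∈ e → w ∈ T) ∧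
  (∀ e ∈ M, ∀ f ∈ M, e ≠ f → ∀ v : V, v ∈ e → v ∉ f) ∧
  (∀ w ∈ T, ∃ e ∈ M, w ∈ e)

/-- The forcing number of the perfect matching `M` of the subgraph of `G`
induced by the vertex set `T`. -/
noncomputable def forcingNumOn {V : Type*} (G : SimpleGraph V) (T : Set V)
    (M : Set (Sym2 V)) : ℕ :=
  sInf {k | ∃ S, S ⊆ M ∧ (∀ M', IsPMOn G T M' → S ⊆ M' → M' = M) ∧ S.ncard = k}

/-- `{i,j}` is one of the `k` special pairs `{2t, 2t+1}` (0-indexed), `t < k`. -/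
def pairIdx (k : ℕ) {n : ℕ} (i j : Fin n) : Prop :=
  ∃ t, t < k ∧ ((i.val = 2 * t ∧ j.val = 2 * t + 1) ∨ (j.val = 2 * t ∧ i.val = 2 * t + 1))

/-- The graph `H_k` on vertices `u_0,…,u_{n-1}` (left copy) and `v_0,…,v_{n-1}`
(right copy): edges `u_i v_i` for all `i`; `u_{2t} u_{2t+1}` and `v_{2t} v_{2t+1}`
for `t < k`; and `u_i v_j`, `u_j v_i` for every pair `i ≠ j` that is not one of the
`k` special pairs. -/
def Hgraph (n k : ℕ) : SimpleGraph (Fin n ⊕ Fin n) :=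
  SimpleGraph.fromRel (fun x y =>
    match x, y with
    | Sum.inl i, Sum.inr j => i = j ∨ ¬ pairIdx k i j
    | Sum.inl i, Sum.inl j => pairIdx k i j
    | Sum.inr i, Sum.inr j => pairIdx k i j
    | Sum.inr _, Sum.inl _ => False)

/-- The perfect matching `M₀ = {u_i v_i : i}` of `H_k`. -/
def M0 (n : ℕ) : Set (Sym2 (Fin n ⊕ Fin n)) :=
  {e | ∃ i : Fin n, e = s(Sum.inl i, Sum.inr i)}

section Dev
open Sum

variable {n k : ℕ}

lemma pairIdx_lt {i j : Fin n} (h : pairIdx k i j) : i.val < 2*k ∧ j.val < 2*k := by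
  obtain ⟨t, ht, h | h⟩ := h <;> omega

lemma pairIdx_symm {i j : Fin n} (h : pairIdx k i j) : pairIdx k j i := by
  obtain ⟨t, ht, h⟩ := h; exact ⟨t, ht, h.symm⟩

lemma pairIdx_ne {i j : Fin n} (h : pairIdx k i j) : i ≠ j := by
  obtain ⟨t, ht, h | h⟩ := h <;> (intro he; apply Fin.val_eq_val i j |>.mpr at he; omega)

lemma Hadj_inl_inr {i j : Fin n} : (Hgraph n k).Adj (inl i) (inr j) ↔ (i = j ∨ ¬ pairIdx k i j) := by
  constructor
  · rintro ⟨hne, h | h⟩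
    · exact h
    · exact h.elim
  · intro h
    exact ⟨by simp, Or.inl h⟩

lemma Hadj_inl_inl {i j : Fin n} : (Hgraph n k).Adj (inl i) (inl j) ↔ pairIdx k i j := by
  constructor
  · rintro ⟨hne, h | h⟩
    · exact h
    · exact pairIdx_symm h
  · intro h
    exact ⟨by simpa using pairIdx_ne h, Or.inl h⟩

lemma Hadj_inr_inr {i j : Fin n} : (Hgraph n k).Adj (inr i) (inr j) ↔ pairIdx k i j := by
  constructor
  · rintro ⟨hne, h | h⟩
    · exact h
    · exact pairIdx_symm h
  · intro h
    exact ⟨by simpa using pairIdx_ne h, Or.inl h⟩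

end Dev
section Dev2
open Sum

variable {n k : ℕ}

/-- Classification of edges of `Hgraph n k`. -/
lemma edge_classify {e : Sym2 (Fin n ⊕ Fin n)} (he : e ∈ (Hgraph n k).edgeSet) :
    (∃ a b : Fin n, e = s(inl a, inr b)) ∨
    (∃ t, t < k ∧ ∃ i j : Fin n, i.val = 2*t ∧ j.val = 2*t+1 ∧
      (e = s(inl i, inl j) ∨ e = s(inr i, inr j))) := by
  induction e using Sym2.ind with
  | _ x y =>
    rw [SimpleGraph.mem_edgeSet] at he
    match x, y with
    | inl i, inr j => exact Or.inl ⟨i, j, rfl⟩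
    | inr j, inl i => exact Or.inl ⟨i, j, Sym2.eq_swap⟩
    | inl i, inl j =>
      have h := Hadj_inl_inl.mp he
      obtain ⟨t, ht, h | h⟩ := h
      · exact Or.inr ⟨t, ht, i, j, h.1, h.2, Or.inl rfl⟩
      · exact Or.inr ⟨t, ht, j, i, h.1, h.2, Or.inl Sym2.eq_swap⟩
    | inr i, inr j =>
      have h := Hadj_inr_inr.mp he
      obtain ⟨t, ht, h | h⟩ := h
      · exact Or.inr ⟨t, ht, i, j, h.1, h.2, Or.inr rfl⟩
      · exact Or.inr ⟨t, ht, j, i, h.1, h.2, Or.inr Sym2.eq_swap⟩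

/-- In a perfect matching, the edge containing a vertex is unique. -/
lemma pm_unique {V : Type*} {G : SimpleGraph V} {M : Set (Sym2 V)} (hM : IsPM G M)
    {e f : Sym2 V} (he : e ∈ M) (hf : f ∈ M) {v : V} (hve : v ∈ e) (hvf : v ∈ f) :
    e = f := by
  by_contra hne
  exact hM.2.1 e he f hf hne v hve hvf

/-- Every set is a forcing set of itself. -/
lemma forcing_self {V : Type*} {G : SimpleGraph V} {M : Set (Sym2 V)} (hM : IsPM G M) :
    IsForcingSet G M M := by
  refine ⟨subset_rfl, fun M' hM' hsub => ?_⟩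
  apply Set.Subset.antisymm _ hsub
  intro e he
  induction e using Sym2.ind with
  | _ x y =>
    obtain ⟨f, hf, hxf⟩ := hM.2.2 x
    have := pm_unique hM' he (hsub hf) (Sym2.mem_mk_left x y) hxf
    rwa [this]

/-- The rotation lemma: swapping two matching edges along an alternating 4-cycle. -/
lemma rotate {V : Type*} {G : SimpleGraph V} {M S : Set (Sym2 V)} (hM : IsPM G M)
    (hS : IsForcingSet G M S) {v1 v2 v3 v4 : V}
    (h12 : s(v1, v2) ∈ M \ S) (h34 : s(v3, v4) ∈ M \ S)
    (d13 : v1 ≠ v3) (d14 : v1 ≠ v4) (d23 : v2 ≠ v3) (d24 : v2 ≠ v4)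
    (a23 : G.Adj v2 v3) (a41 : G.Adj v4 v1) : False := by
  have a12 : G.Adj v1 v2 := by
    have := hM.1 h12.1; rwa [SimpleGraph.mem_edgeSet] at this
  have a34 : G.Adj v3 v4 := by
    have := hM.1 h34.1; rwa [SimpleGraph.mem_edgeSet] at this
  have d12 : v1 ≠ v2 := a12.ne
  have d34 : v3 ≠ v4 := a34.ne
  have hef : s(v1,v2) ≠ s(v3,v4) := by
    rw [Ne, Sym2.eq_iff]
    rintro (⟨h, -⟩ | ⟨h, -⟩)
    · exact d13 h
    · exact d14 h
  have hmem' : ∀ g ∈ (insert s(v2,v3) (insert s(v4,v1) (M \ {s(v1,v2), s(v3,v4)})) : Set (Sym2 V)),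
      g = s(v2,v3) ∨ g = s(v4,v1) ∨ (g ∈ M ∧ g ≠ s(v1,v2) ∧ g ≠ s(v3,v4)) := by
    intro g hg
    rcases hg with hg | hg | hg
    · exact Or.inl hg
    · exact Or.inr (Or.inl hg)
    · rw [Set.mem_diff, Set.mem_insert_iff, Set.mem_singleton_iff] at hg
      exact Or.inr (Or.inr ⟨hg.1, fun h => hg.2 (Or.inl h), fun h => hg.2 (Or.inr h)⟩)
  have hold : ∀ g ∈ M, g ≠ s(v1,v2) → g ≠ s(v3,v4) → ∀ v : V, v ∈ g →
      (v ≠ v1 ∧ v ≠ v2 ∧ v ≠ v3 ∧ v ≠ v4) := by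
    intro g hg hge hgf v hvg
    refine ⟨?_, ?_, ?_, ?_⟩ <;> intro hv <;> subst hv
    · exact hM.2.1 g hg _ h12.1 hge v hvg (Sym2.mem_mk_left _ _)
    · exact hM.2.1 g hg _ h12.1 hge v hvg (Sym2.mem_mk_right _ _)
    · exact hM.2.1 g hg _ h34.1 hgf v hvg (Sym2.mem_mk_left _ _)
    · exact hM.2.1 g hg _ h34.1 hgf v hvg (Sym2.mem_mk_right _ _)
  have hxM : s(v2,v3) ∉ M := by
    intro hx
    have : s(v2,v3) = s(v1,v2) :=
      pm_unique hM hx h12.1 (v := v2) (Sym2.mem_mk_left _ _) (Sym2.mem_mk_right _ _)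
    rw [Sym2.eq_iff] at this
    rcases this with ⟨h, -⟩ | ⟨-, h⟩
    · exact d12 h.symm
    · exact d13 h.symm
  have hPM' : IsPM G (insert s(v2,v3) (insert s(v4,v1) (M \ {s(v1,v2), s(v3,v4)}))) := by
    refine ⟨?_, ?_, ?_⟩
    · intro g hg
      rcases hmem' g hg with rfl | rfl | h
      · rw [SimpleGraph.mem_edgeSet]; exact a23
      · rw [SimpleGraph.mem_edgeSet]; exact a41
      · exact hM.1 h.1
    · intro g hg g' hg' hne v hvg hvg'
      rcases hmem' g hg with rfl | rfl | h <;> rcases hmem' g' hg' with rfl | rfl | h'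
      · exact hne rfl
      · rw [Sym2.mem_iff] at hvg hvg'
        rcases hvg with rfl | rfl <;> rcases hvg' with h | h <;> simp_all
      · obtain ⟨c1, c2, c3, c4⟩ := hold g' h'.1 h'.2.1 h'.2.2 v hvg'
        rw [Sym2.mem_iff] at hvg
        rcases hvg with rfl | rfl <;> simp_all
      · rw [Sym2.mem_iff] at hvg hvg'
        rcases hvg with rfl | rfl <;> rcases hvg' with h | h <;> simp_all
      · exact hne rfl
      · obtain ⟨c1, c2, c3, c4⟩ := hold g' h'.1 h'.2.1 h'.2.2 v hvg'
        rw [Sym2.mem_iff] at hvg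
        rcases hvg with rfl | rfl <;> simp_all
      · obtain ⟨c1, c2, c3, c4⟩ := hold g h.1 h.2.1 h.2.2 v hvg
        rw [Sym2.mem_iff] at hvg'
        rcases hvg' with rfl | rfl <;> simp_all
      · obtain ⟨c1, c2, c3, c4⟩ := hold g h.1 h.2.1 h.2.2 v hvg
        rw [Sym2.mem_iff] at hvg'
        rcases hvg' with rfl | rfl <;> simp_all
      · exact hM.2.1 g h.1 g' h'.1 hne v hvg hvg'
    · intro v
      by_cases h1 : v = v1
      · exact ⟨s(v4,v1), by simp, by simp [h1]⟩
      by_cases h2 : v = v2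
      · exact ⟨s(v2,v3), by simp, by simp [h2]⟩
      by_cases h3 : v = v3
      · exact ⟨s(v2,v3), by simp, by simp [h3]⟩
      by_cases h4 : v = v4
      · exact ⟨s(v4,v1), by simp, by simp [h4]⟩
      obtain ⟨g, hg, hvg⟩ := hM.2.2 v
      have hge : g ≠ s(v1,v2) := by
        intro h; subst h
        rw [Sym2.mem_iff] at hvg
        rcases hvg with h | h
        · exact h1 h
        · exact h2 h
      have hgf : g ≠ s(v3,v4) := by
        intro h; subst h
        rw [Sym2.mem_iff] at hvg
        rcases hvg with h | h
        · exact h3 h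
        · exact h4 h
      exact ⟨g, by simp [Set.mem_diff, hg, hge, hgf], hvg⟩
  have hSsub : S ⊆ insert s(v2,v3) (insert s(v4,v1) (M \ {s(v1,v2), s(v3,v4)})) := by
    intro g hg
    have hgM : g ∈ M := hS.1 hg
    have hge : g ≠ s(v1,v2) := fun h => h12.2 (h ▸ hg)
    have hgf : g ≠ s(v3,v4) := fun h => h34.2 (h ▸ hg)
    simp [Set.mem_diff, hgM, hge, hgf]
  have heq := hS.2 _ hPM' hSsub
  apply hxM
  rw [← heq]
  simp

end Dev2
section Dev3
open Sum

variable {n k : ℕ}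

/-- Double counting: a perfect matching has at least half as many edges as vertices. -/
lemma pm_two_mul_ncard {V : Type*} [Fintype V] {G : SimpleGraph V} {M : Set (Sym2 V)}
    (hM : IsPM G M) : Fintype.card V ≤ 2 * M.ncard := by
  classical
  have hfinM : M.Finite := Set.toFinite M
  choose f hf1 hf2 using hM.2.2
  have maps : ∀ v ∈ (Finset.univ : Finset V), f v ∈ hfinM.toFinset := fun v _ => by
    rw [Set.Finite.mem_toFinset]; exact hf1 v
  have fib : ∀ e ∈ hfinM.toFinset, (Finset.univ.filter (fun v => f v = e)).card ≤ 2 := by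
    intro e he
    induction e using Sym2.ind with
    | _ x y =>
      have hsub : Finset.univ.filter (fun v => f v = s(x,y)) ⊆ ({x, y} : Finset V) := by
        intro v hv
        simp only [Finset.mem_filter] at hv
        have hm : v ∈ f v := hf2 v
        rw [hv.2, Sym2.mem_iff] at hm
        simpa using hm
      refine le_trans (Finset.card_le_card hsub) ?_
      refine le_trans (Finset.card_insert_le _ _) ?_
      simp
  have := Finset.card_le_mul_card_image_of_maps_to maps 2 fib
  rwa [Finset.card_univ, ← Set.ncard_eq_toFinset_card M hfinM] at this

lemma uvmk_inj : Function.Injective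
    (fun p : Fin n × Fin n => s(Sum.inl p.1, Sum.inr p.2) : _ → Sym2 (Fin n ⊕ Fin n)) := by
  intro p q h
  simp only [Sym2.eq_iff] at h
  rcases h with ⟨h1, h2⟩ | ⟨h1, h2⟩
  · exact Prod.ext (by simpa using h1) (by simpa using h2)
  · simp at h1
lemma uv_fst_inj {M : Set (Sym2 (Fin n ⊕ Fin n))} (hM : IsPM (Hgraph n k) M)
    {a b d : Fin n} (hp : s(inl a, inr b) ∈ M) (hq : s(inl a, inr d) ∈ M) : b = d := by
  have := pm_unique hM hp hq (v := inl a) (Sym2.mem_mk_left _ _) (Sym2.mem_mk_left _ _)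
  rw [Sym2.eq_iff] at this
  rcases this with ⟨-, h⟩ | ⟨h, -⟩
  · simpa using h
  · simp at h

lemma uv_snd_inj {M : Set (Sym2 (Fin n ⊕ Fin n))} (hM : IsPM (Hgraph n k) M)
    {a b c : Fin n} (hp : s(inl a, inr b) ∈ M) (hq : s(inl c, inr b) ∈ M) : a = c := by
  have := pm_unique hM hp hq (v := inr b) (Sym2.mem_mk_right _ _) (Sym2.mem_mk_right _ _)
  rw [Sym2.eq_iff] at this
  rcases this with ⟨h, -⟩ | ⟨-, h⟩
  · simpa using h
  · simp at h

/-- If `u_a` is matched by a `uv` edge, then no left edge touching `u_a`'s pair is in `M`. -/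
lemma left_not_mem {M : Set (Sym2 (Fin n ⊕ Fin n))} (hM : IsPM (Hgraph n k) M)
    {a b : Fin n} {t : ℕ} (huv : s(inl a, inr b) ∈ M) (ha : a.val = 2*t ∨ a.val = 2*t+1) :
    ∀ i j : Fin n, i.val = 2*t → j.val = 2*t+1 → s(inl i, inl j) ∉ M := by
  intro i j hi hj hmem
  have hmemv : (inl a : Fin n ⊕ Fin n) ∈ (s(inl i, inl j) : Sym2 (Fin n ⊕ Fin n)) := by
    rw [Sym2.mem_iff]
    rcases ha with ha | ha
    · exact Or.inl (by simp [Fin.ext_iff]; omega)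
    · exact Or.inr (by simp [Fin.ext_iff]; omega)
  have := pm_unique hM hmem huv hmemv (Sym2.mem_mk_left _ _)
  rw [Sym2.eq_iff] at this
  rcases this with ⟨-, h⟩ | ⟨h, -⟩ <;> simp at h

lemma right_not_mem {M : Set (Sym2 (Fin n ⊕ Fin n))} (hM : IsPM (Hgraph n k) M)
    {a b : Fin n} {t : ℕ} (huv : s(inl a, inr b) ∈ M) (hb : b.val = 2*t ∨ b.val = 2*t+1) :
    ∀ i j : Fin n, i.val = 2*t → j.val = 2*t+1 → s(inr i, inr j) ∉ M := by
  intro i j hi hj hmem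
  have hmemv : (inr b : Fin n ⊕ Fin n) ∈ (s(inr i, inr j) : Sym2 (Fin n ⊕ Fin n)) := by
    rw [Sym2.mem_iff]
    rcases hb with hb | hb
    · exact Or.inl (by simp [Fin.ext_iff]; omega)
    · exact Or.inr (by simp [Fin.ext_iff]; omega)
  have := pm_unique hM hmem huv hmemv (Sym2.mem_mk_right _ _)
  rw [Sym2.eq_iff] at this
  rcases this with ⟨h, -⟩ | ⟨-, h⟩ <;> simp at h

end Dev3
section Dev4
open Sum

variable {n k : ℕ}

lemma special_shape_unique {e : Sym2 (Fin n ⊕ Fin n)} {t t' : ℕ}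
    (h : ∃ i j : Fin n, i.val = 2*t ∧ j.val = 2*t+1 ∧
      (e = s(inl i, inl j) ∨ e = s(inr i, inr j)))
    (h' : ∃ i j : Fin n, i.val = 2*t' ∧ j.val = 2*t'+1 ∧
      (e = s(inl i, inl j) ∨ e = s(inr i, inr j))) : t = t' := by
  obtain ⟨i, j, hi, hj, hc⟩ := h
  obtain ⟨i', j', hi', hj', hc'⟩ := h'
  rcases hc with he | he <;> rcases hc' with he' | he'
  · have hm : (inl i : Fin n ⊕ Fin n) ∈ s(inl i', inl j') := by
      rw [← he', he]; exact Sym2.mem_mk_left _ _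
    simp only [Sym2.mem_iff, Sum.inl.injEq, Fin.ext_iff] at hm
    omega
  · have hm : (inl i : Fin n ⊕ Fin n) ∈ s(inr i', inr j') := by
      rw [← he', he]; exact Sym2.mem_mk_left _ _
    simp at hm
  · have hm : (inr i : Fin n ⊕ Fin n) ∈ s(inl i', inl j') := by
      rw [← he', he]; exact Sym2.mem_mk_left _ _
    simp at hm
  · have hm : (inr i : Fin n ⊕ Fin n) ∈ s(inr i', inr j') := by
      rw [← he', he]; exact Sym2.mem_mk_left _ _
    simp only [Sym2.mem_iff, Sum.inr.injEq, Fin.ext_iff] at hm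
    omega

open scoped Classical in
noncomputable def sidx (n k : ℕ) (e : Sym2 (Fin n ⊕ Fin n)) : ℕ :=
  if h : ∃ t, t < k ∧ ∃ i j : Fin n, i.val = 2*t ∧ j.val = 2*t+1 ∧
      (e = s(inl i, inl j) ∨ e = s(inr i, inr j)) then h.choose else 0

lemma sidx_eq {t : ℕ} (ht : t < k) {e : Sym2 (Fin n ⊕ Fin n)}
    (hsh : ∃ i j : Fin n, i.val = 2*t ∧ j.val = 2*t+1 ∧
      (e = s(inl i, inl j) ∨ e = s(inr i, inr j))) : sidx n k e = t := by
  unfold sidx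
  split
  · next h => exact special_shape_unique h.choose_spec.2 hsh
  · next h => exact absurd ⟨t, ht, hsh⟩ h

lemma lower_main (hkn : 2*k + 1 ≤ n) {M S : Set (Sym2 (Fin n ⊕ Fin n))}
    (hM : IsPM (Hgraph n k) M) (hF : IsForcingSet (Hgraph n k) M S) :
    n - k - 1 ≤ S.ncard := by
  classical
  by_contra hlt
  push_neg at hlt
  have hn2 : k + 2 ≤ n := by omega
  have hSM : S ⊆ M := hF.1
  have hMfin : M.Finite := Set.toFinite M
  have hSfin : S.Finite := hMfin.subset hSM
  have hMn : n ≤ M.ncard := by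
    have h2 := pm_two_mul_ncard hM
    rw [Fintype.card_sum, Fintype.card_fin] at h2
    omega
  have hD : k + 2 ≤ (M \ S).ncard := by
    rw [Set.ncard_diff hSM hSfin]
    omega
  set D := M \ S with hDdef
  have hDM : D ⊆ M := Set.diff_subset
  by_cases hLR : (∃ t, t < k ∧ ∃ i j : Fin n, i.val = 2*t ∧ j.val = 2*t+1 ∧ s(inl i, inl j) ∈ D)
      ∧ (∃ t, t < k ∧ ∃ i j : Fin n, i.val = 2*t ∧ j.val = 2*t+1 ∧ s(inr i, inr j) ∈ D)
  · obtain ⟨⟨t, ht, i, j, hi, hj, hijD⟩, ⟨u, hu, a, b, ha, hb, habD⟩⟩ := hLR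
    by_cases hts : t = u
    · subst hts
      refine rotate hM hF (v1 := inl i) (v2 := inl j) (v3 := inr b) (v4 := inr a) hijD
        ?_ (by simp) (by simp) (by simp) (by simp) ?_ ?_
      · rw [Sym2.eq_swap]; exact habD
      · have hjb : j = b := Fin.ext (by omega)
        exact Hadj_inl_inr.mpr (Or.inl hjb)
      · have hia : i = a := Fin.ext (by omega)
        exact (Hadj_inl_inr.mpr (Or.inl hia)).symm
    · refine rotate hM hF (v1 := inl i) (v2 := inl j) (v3 := inr a) (v4 := inr b) hijD habD
        (by simp) (by simp) (by simp) (by simp) ?_ ?_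
      · refine Hadj_inl_inr.mpr (Or.inr ?_)
        rintro ⟨r, hr, hh | hh⟩ <;> omega
      · refine (Hadj_inl_inr.mpr (Or.inr ?_)).symm
        rintro ⟨r, hr, hh | hh⟩ <;> omega
  · -- counting case
    set P : Finset (Fin n × Fin n) :=
      Finset.univ.filter (fun p => s(inl p.1, inr p.2) ∈ D) with hPdef
    have hPmem : ∀ p : Fin n × Fin n, p ∈ P ↔ s(inl p.1, inr p.2) ∈ D := by
      intro p; rw [hPdef, Finset.mem_filter]; simp
    have hPfst : ∀ p ∈ P, ∀ q ∈ P, p.1 = q.1 → p = q := by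
      intro p hp q hq h
      have h1 : s(inl p.1, inr p.2) ∈ M := hDM ((hPmem p).mp hp)
      have h2 : s(inl p.1, inr q.2) ∈ M := by rw [h]; exact hDM ((hPmem q).mp hq)
      exact Prod.ext h (uv_fst_inj hM h1 h2)
    have hPsnd : ∀ p ∈ P, ∀ q ∈ P, p.2 = q.2 → p = q := by
      intro p hp q hq h
      have h1 : s(inl p.1, inr p.2) ∈ M := hDM ((hPmem p).mp hp)
      have h2 : s(inl q.1, inr p.2) ∈ M := by rw [h]; exact hDM ((hPmem q).mp hq)
      exact Prod.ext (uv_snd_inj hM h1 h2) h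
    have hDfin : D.Finite := Set.toFinite D
    have hDfcard : k + 2 ≤ hDfin.toFinset.card := by
      rw [← Set.ncard_eq_toFinset_card D hDfin]; exact hD
    have hsplit := Finset.card_filter_add_card_filter_not
      (s := hDfin.toFinset) (p := fun e => ∃ p : Fin n × Fin n, e = s(inl p.1, inr p.2))
    have hDuvP : hDfin.toFinset.filter (fun e => ∃ p : Fin n × Fin n, e = s(inl p.1, inr p.2))
        = P.image (fun p => s(inl p.1, inr p.2)) := by
      ext e
      rw [Finset.mem_filter, Finset.mem_image, Set.Finite.mem_toFinset]
      constructor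
      · rintro ⟨heD, p, rfl⟩
        exact ⟨p, (hPmem p).mpr heD, rfl⟩
      · rintro ⟨p, hp, rfl⟩
        exact ⟨(hPmem p).mp hp, p, rfl⟩
    have hDuvcard : (hDfin.toFinset.filter
        (fun e => ∃ p : Fin n × Fin n, e = s(inl p.1, inr p.2))).card = P.card := by
      rw [hDuvP]; exact Finset.card_image_of_injective _ uvmk_inj
    set F : Finset ℕ := (Finset.range k).filter
        (fun t => (∀ i j : Fin n, i.val = 2*t → j.val = 2*t+1 → s(inl i, inl j) ∉ M) ∧
                  (∀ i j : Fin n, i.val = 2*t → j.val = 2*t+1 → s(inr i, inr j) ∉ M)) with hFdef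
    have hFsub : F ⊆ Finset.range k := Finset.filter_subset _ _
    have hDoF : (hDfin.toFinset.filter
        (fun e => ¬ ∃ p : Fin n × Fin n, e = s(inl p.1, inr p.2))).card ≤ k - F.card := by
      have hinj : (hDfin.toFinset.filter
          (fun e => ¬ ∃ p : Fin n × Fin n, e = s(inl p.1, inr p.2))).card
          ≤ (Finset.range k \ F).card := by
        apply Finset.card_le_card_of_injOn (sidx n k)
        · intro e he
          rw [Finset.mem_coe, Finset.mem_filter, Set.Finite.mem_toFinset] at he
          obtain ⟨heD, hne⟩ := he
          have heM : e ∈ M := hDM heD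
          rcases edge_classify (hM.1 heM) with ⟨a, b, rfl⟩ | ⟨t, ht, i, j, hi, hj, hc⟩
          · exact absurd ⟨(a, b), rfl⟩ hne
          · rw [sidx_eq ht ⟨i, j, hi, hj, hc⟩, Finset.mem_coe, Finset.mem_sdiff]
            refine ⟨Finset.mem_range.mpr ht, ?_⟩
            rw [hFdef, Finset.mem_filter]
            rintro ⟨-, hF1, hF2⟩
            rcases hc with rfl | rfl
            · exact hF1 i j hi hj heM
            · exact hF2 i j hi hj heM
        · intro e he e' he' heq
          rw [Finset.mem_coe, Finset.mem_filter, Set.Finite.mem_toFinset] at he he'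
          obtain ⟨heD, hene⟩ := he
          obtain ⟨heD', hene'⟩ := he'
          rcases edge_classify (hM.1 (hDM heD)) with ⟨a, b, rfl⟩ | ⟨t, ht, i, j, hi, hj, hc⟩
          · exact absurd ⟨(a, b), rfl⟩ hene
          rcases edge_classify (hM.1 (hDM heD')) with ⟨a, b, rfl⟩ | ⟨t', ht', i', j', hi', hj', hc'⟩
          · exact absurd ⟨(a, b), rfl⟩ hene'
          rw [sidx_eq ht ⟨i, j, hi, hj, hc⟩, sidx_eq ht' ⟨i', j', hi', hj', hc'⟩] at heq
          subst heq
          have hii : i = i' := Fin.ext (by omega)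
          have hjj : j = j' := Fin.ext (by omega)
          subst hii; subst hjj
          rcases hc with rfl | rfl <;> rcases hc' with rfl | rfl
          · rfl
          · exact absurd ⟨⟨t, ht, i, j, hi, hj, heD⟩, ⟨t, ht, i, j, hi, hj, heD'⟩⟩ hLR
          · exact absurd ⟨⟨t, ht, i, j, hi, hj, heD'⟩, ⟨t, ht, i, j, hi, hj, heD⟩⟩ hLR
          · rfl
      have hsd : (Finset.range k \ F).card = k - F.card := by
        rw [Finset.card_sdiff_of_subset hFsub, Finset.card_range]
      omega
    have hFk : F.card ≤ k := by
      have := Finset.card_le_card hFsub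
      simpa using this
    have hPF : F.card + 2 ≤ P.card := by omega
    by_cases hblk : ∀ p ∈ P, ∀ q ∈ P, p ≠ q → pairIdx k p.1 q.2 ∨ pairIdx k q.1 p.2
    · -- all pairs blocked: counting contradiction
      have key : ∀ p ∈ P, ∀ q ∈ P, pairIdx k p.1 q.2 → p.1.val / 2 ∈ F := by
        intro p hp q hq hpi
        obtain ⟨t, ht, hc⟩ := hpi
        have hval : p.1.val / 2 = t := by rcases hc with ⟨h1, h2⟩ | ⟨h1, h2⟩ <;> omega
        rw [hval, hFdef, Finset.mem_filter]
        refine ⟨Finset.mem_range.mpr ht, ?_, ?_⟩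
        · exact left_not_mem hM (hDM ((hPmem p).mp hp))
            (by rcases hc with ⟨h1, -⟩ | ⟨-, h2⟩; exacts [Or.inl h1, Or.inr h2])
        · exact right_not_mem hM (hDM ((hPmem q).mp hq))
            (by rcases hc with ⟨-, h2⟩ | ⟨h1, -⟩; exacts [Or.inr h2, Or.inl h1])
      have hchi : P.offDiag.card ≤ (F ×ˢ (Finset.univ : Finset (Bool × Bool))).card := by
        apply Finset.card_le_card_of_injOn (fun pq =>
          if pairIdx k pq.1.1 pq.2.2 then ((pq.1.1.val / 2 : ℕ), (decide (pq.1.1.val % 2 = 0), false))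
          else ((pq.2.1.val / 2 : ℕ), (decide (pq.2.1.val % 2 = 0), true)))
        · intro pq hpq
          rw [Finset.mem_coe, Finset.mem_offDiag] at hpq
          obtain ⟨hp, hq, hne⟩ := hpq
          by_cases hb : pairIdx k pq.1.1 pq.2.2
          · simp only [Finset.mem_coe, if_pos hb]
            exact Finset.mem_product.mpr ⟨key _ hp _ hq hb, Finset.mem_univ _⟩
          · have hb2 := (hblk _ hp _ hq hne).resolve_left hb
            simp only [Finset.mem_coe, if_neg hb]
            exact Finset.mem_product.mpr ⟨key _ hq _ hp hb2, Finset.mem_univ _⟩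
        · intro pq hpq pq' hpq' heq
          rw [Finset.mem_coe, Finset.mem_offDiag] at hpq hpq'
          obtain ⟨hp, hq, hne⟩ := hpq
          obtain ⟨hp', hq', hne'⟩ := hpq'
          dsimp only at heq
          by_cases hb : pairIdx k pq.1.1 pq.2.2 <;> by_cases hb' : pairIdx k pq'.1.1 pq'.2.2
          · rw [if_pos hb, if_pos hb'] at heq
            simp only [Prod.mk.injEq] at heq
            obtain ⟨hdiv, hpar, -⟩ := heq
            have hmod : pq.1.1.val % 2 = pq'.1.1.val % 2 := by
              have := decide_eq_decide.mp hpar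
              omega
            have hfst : pq.1.1 = pq'.1.1 := Fin.ext (by omega)
            have hpp : pq.1 = pq'.1 := hPfst _ hp _ hp' hfst
            obtain ⟨t, ht, hc⟩ := hb
            obtain ⟨t', ht', hc'⟩ := hb'
            have hfv : pq.1.1.val = pq'.1.1.val := by rw [hfst]
            have hsnd : pq.2.2 = pq'.2.2 := by
              refine Fin.ext ?_
              rcases hc with ⟨h1, h2⟩ | ⟨h1, h2⟩ <;> rcases hc' with ⟨h1', h2'⟩ | ⟨h1', h2'⟩ <;> omega
            have hqq : pq.2 = pq'.2 := hPsnd _ hq _ hq' hsnd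
            exact Prod.ext hpp hqq
          · rw [if_pos hb, if_neg hb'] at heq
            simp only [Prod.mk.injEq] at heq
            exact absurd heq.2.2 (by simp)
          · rw [if_neg hb, if_pos hb'] at heq
            simp only [Prod.mk.injEq] at heq
            exact absurd heq.2.2 (by simp)
          · have hb2 := (hblk _ hp _ hq hne).resolve_left hb
            have hb2' := (hblk _ hp' _ hq' hne').resolve_left hb'
            rw [if_neg hb, if_neg hb'] at heq
            simp only [Prod.mk.injEq] at heq
            obtain ⟨hdiv, hpar, -⟩ := heq
            have hmod : pq.2.1.val % 2 = pq'.2.1.val % 2 := by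
              have := decide_eq_decide.mp hpar
              omega
            have hfst : pq.2.1 = pq'.2.1 := Fin.ext (by omega)
            have hqq : pq.2 = pq'.2 := hPfst _ hq _ hq' hfst
            obtain ⟨t, ht, hc⟩ := hb2
            obtain ⟨t', ht', hc'⟩ := hb2'
            have hfv : pq.2.1.val = pq'.2.1.val := by rw [hfst]
            have hsnd : pq.1.2 = pq'.1.2 := by
              refine Fin.ext ?_
              rcases hc with ⟨h1, h2⟩ | ⟨h1, h2⟩ <;> rcases hc' with ⟨h1', h2'⟩ | ⟨h1', h2'⟩ <;> omega
            have hpp : pq.1 = pq'.1 := hPsnd _ hp _ hp' hsnd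
            exact Prod.ext hpp hqq
      have hcard4 : (F ×ˢ (Finset.univ : Finset (Bool × Bool))).card = F.card * 4 := by
        rw [Finset.card_product]
        simp
      rw [Finset.offDiag_card, hcard4] at hchi
      have hmm2 : ∀ m : ℕ, m * (m - 1) = m * m - m := by
        intro m
        cases m with
        | zero => rfl
        | succ mm =>
          rw [Nat.succ_sub_one, Nat.mul_succ]
          simp
      have hle : (F.card + 2) * (F.card + 1) ≤ P.card * (P.card - 1) :=
        Nat.mul_le_mul hPF (by omega)
      rw [hmm2] at hle
      have hfin : F.card * F.card + 3 * F.card + 2 ≤ F.card * 4 := by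
        have := le_trans hle hchi
        nlinarith
      rcases Nat.eq_zero_or_pos F.card with h0 | hapos
      · rw [h0] at hfin; omega
      · nlinarith
    · -- two unblocked uv edges: rotate
      push_neg at hblk
      obtain ⟨p, hp, q, hq, hne, hb1, hb2⟩ := hblk
      have hpD : s(inl p.1, inr p.2) ∈ D := (hPmem p).mp hp
      have hqD : s(inl q.1, inr q.2) ∈ D := (hPmem q).mp hq
      have hp1q1 : p.1 ≠ q.1 := fun h => hne (hPfst p hp q hq h)
      have hp2q2 : p.2 ≠ q.2 := fun h => hne (hPsnd p hp q hq h)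
      refine rotate hM hF (v1 := inl p.1) (v2 := inr p.2) (v3 := inl q.1) (v4 := inr q.2)
        hpD hqD (by simp [hp1q1]) (by simp) (by simp) (by simp [hp2q2]) ?_ ?_
      · exact (Hadj_inl_inr.mpr (Or.inr hb2)).symm
      · exact (Hadj_inl_inr.mpr (Or.inr hb1)).symm

end Dev4
section Dev5
open Sum

variable {n k : ℕ}

def fmk (n : ℕ) (hn : 0 < n) (x : ℕ) : Fin n := ⟨x % n, Nat.mod_lt _ hn⟩

lemma fmk_val {n : ℕ} (hn : 0 < n) {x : ℕ} (h : x < n) : (fmk n hn x).val = x :=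
  Nat.mod_eq_of_lt h

def Lg (n : ℕ) (hn : 0 < n) (t : ℕ) : Sym2 (Fin n ⊕ Fin n) :=
  s(inl (fmk n hn (2*t)), inl (fmk n hn (2*t+1)))

def Rg (n : ℕ) (hn : 0 < n) (t : ℕ) : Sym2 (Fin n ⊕ Fin n) :=
  s(inr (fmk n hn (2*t)), inr (fmk n hn (2*t+1)))

def Tg (n : ℕ) (hn : 0 < n) (i : ℕ) : Sym2 (Fin n ⊕ Fin n) :=
  s(inl (fmk n hn i), inr (fmk n hn i))

lemma upper_main (hn0 : 0 < n) (hkn : 2*k + 1 ≤ n) :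
    ∃ M : Set (Sym2 (Fin n ⊕ Fin n)), IsPM (Hgraph n k) M ∧
      ∃ S, IsForcingSet (Hgraph n k) M S ∧ S.ncard = n - k - 1 := by
  classical
  set Mf : Finset (Sym2 (Fin n ⊕ Fin n)) :=
    (Finset.range k).image (Lg n hn0) ∪ (Finset.range k).image (Rg n hn0) ∪
      (Finset.Ico (2*k) n).image (Tg n hn0) with hMfdef
  set Sf : Finset (Sym2 (Fin n ⊕ Fin n)) :=
    (Finset.range k).image (Lg n hn0) ∪ (Finset.Ico (2*k) (n-1)).image (Tg n hn0) with hSfdef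
  -- the canonical edge at each vertex
  set Ed : (Fin n ⊕ Fin n) → Sym2 (Fin n ⊕ Fin n) := fun v =>
    match v with
    | inl i => if i.val < 2*k then Lg n hn0 (i.val/2) else Tg n hn0 i.val
    | inr i => if i.val < 2*k then Rg n hn0 (i.val/2) else Tg n hn0 i.val with hEddef
  -- basic val computations
  have hLval : ∀ t, t < k → (fmk n hn0 (2*t)).val = 2*t ∧ (fmk n hn0 (2*t+1)).val = 2*t+1 :=
    fun t ht => ⟨fmk_val hn0 (by omega), fmk_val hn0 (by omega)⟩
  have hEd_inl : ∀ i : Fin n, Ed (inl i) =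
      if i.val < 2*k then Lg n hn0 (i.val/2) else Tg n hn0 i.val := fun i => rfl
  have hEd_inr : ∀ i : Fin n, Ed (inr i) =
      if i.val < 2*k then Rg n hn0 (i.val/2) else Tg n hn0 i.val := fun i => rfl
  have hEd_mem : ∀ e ∈ Mf, ∀ v : Fin n ⊕ Fin n, v ∈ e → Ed v = e := by
    intro e he v hv
    rw [hMfdef, Finset.mem_union, Finset.mem_union] at he
    rcases he with (he | he) | he
    · obtain ⟨t, ht, rfl⟩ := Finset.mem_image.mp he
      rw [Finset.mem_range] at ht
      obtain ⟨h1, h2⟩ := hLval t ht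
      rw [Lg, Sym2.mem_iff] at hv
      rcases hv with rfl | rfl
      · rw [hEd_inl, h1, if_pos (by omega), show 2*t/2 = t by omega]
      · rw [hEd_inl, h2, if_pos (by omega), show (2*t+1)/2 = t by omega]
    · obtain ⟨t, ht, rfl⟩ := Finset.mem_image.mp he
      rw [Finset.mem_range] at ht
      obtain ⟨h1, h2⟩ := hLval t ht
      rw [Rg, Sym2.mem_iff] at hv
      rcases hv with rfl | rfl
      · rw [hEd_inr, h1, if_pos (by omega), show 2*t/2 = t by omega]
      · rw [hEd_inr, h2, if_pos (by omega), show (2*t+1)/2 = t by omega]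
    · obtain ⟨i, hi, rfl⟩ := Finset.mem_image.mp he
      rw [Finset.mem_Ico] at hi
      have hval : (fmk n hn0 i).val = i := fmk_val hn0 hi.2
      rw [Tg, Sym2.mem_iff] at hv
      rcases hv with rfl | rfl
      · rw [hEd_inl, hval, if_neg (by omega)]
      · rw [hEd_inr, hval, if_neg (by omega)]
  have hEd_self : ∀ v : Fin n ⊕ Fin n, v ∈ Ed v ∧ Ed v ∈ Mf := by
    intro v
    match v with
    | inl i =>
      by_cases hlt : i.val < 2*k
      · rw [hEd_inl, if_pos hlt]
        have h1 : (fmk n hn0 (2*(i.val/2))).val = 2*(i.val/2) := fmk_val hn0 (by omega)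
        have h2 : (fmk n hn0 (2*(i.val/2)+1)).val = 2*(i.val/2)+1 := fmk_val hn0 (by omega)
        constructor
        · rw [Lg, Sym2.mem_iff]
          rcases Nat.even_or_odd i.val with he | ho
          · left; congr 1; apply Fin.ext; rw [h1]; obtain ⟨c, hc⟩ := he; omega
          · right; congr 1; apply Fin.ext; rw [h2]; obtain ⟨c, hc⟩ := ho; omega
        · rw [hMfdef]
          refine Finset.mem_union_left _ (Finset.mem_union_left _ (Finset.mem_image.mpr ?_))
          exact ⟨i.val/2, Finset.mem_range.mpr (by omega), rfl⟩
      · rw [hEd_inl, if_neg hlt]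
        constructor
        · rw [Tg, Sym2.mem_iff]
          left; congr 1; apply Fin.ext; rw [fmk_val hn0 i.isLt]
        · rw [hMfdef]
          refine Finset.mem_union_right _ (Finset.mem_image.mpr ?_)
          exact ⟨i.val, Finset.mem_Ico.mpr ⟨by omega, i.isLt⟩, rfl⟩
    | inr i =>
      by_cases hlt : i.val < 2*k
      · rw [hEd_inr, if_pos hlt]
        have h1 : (fmk n hn0 (2*(i.val/2))).val = 2*(i.val/2) := fmk_val hn0 (by omega)
        have h2 : (fmk n hn0 (2*(i.val/2)+1)).val = 2*(i.val/2)+1 := fmk_val hn0 (by omega)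
        constructor
        · rw [Rg, Sym2.mem_iff]
          rcases Nat.even_or_odd i.val with he | ho
          · left; congr 1; apply Fin.ext; rw [h1]; obtain ⟨c, hc⟩ := he; omega
          · right; congr 1; apply Fin.ext; rw [h2]; obtain ⟨c, hc⟩ := ho; omega
        · rw [hMfdef]
          refine Finset.mem_union_left _ (Finset.mem_union_right _ (Finset.mem_image.mpr ?_))
          exact ⟨i.val/2, Finset.mem_range.mpr (by omega), rfl⟩
      · rw [hEd_inr, if_neg hlt]
        constructor
        · rw [Tg, Sym2.mem_iff]
          right; congr 1; apply Fin.ext; rw [fmk_val hn0 i.isLt]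
        · rw [hMfdef]
          refine Finset.mem_union_right _ (Finset.mem_image.mpr ?_)
          exact ⟨i.val, Finset.mem_Ico.mpr ⟨by omega, i.isLt⟩, rfl⟩
  have hPM : IsPM (Hgraph n k) ↑Mf := by
    refine ⟨?_, ?_, ?_⟩
    · intro e he
      rw [Finset.mem_coe, hMfdef, Finset.mem_union, Finset.mem_union] at he
      rcases he with (he | he) | he
      · obtain ⟨t, ht, rfl⟩ := Finset.mem_image.mp he
        rw [Finset.mem_range] at ht
        obtain ⟨h1, h2⟩ := hLval t ht
        rw [Lg, SimpleGraph.mem_edgeSet]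
        exact Hadj_inl_inl.mpr ⟨t, ht, Or.inl ⟨h1, h2⟩⟩
      · obtain ⟨t, ht, rfl⟩ := Finset.mem_image.mp he
        rw [Finset.mem_range] at ht
        obtain ⟨h1, h2⟩ := hLval t ht
        rw [Rg, SimpleGraph.mem_edgeSet]
        exact Hadj_inr_inr.mpr ⟨t, ht, Or.inl ⟨h1, h2⟩⟩
      · obtain ⟨i, hi, rfl⟩ := Finset.mem_image.mp he
        rw [Tg, SimpleGraph.mem_edgeSet]
        exact Hadj_inl_inr.mpr (Or.inl rfl)
    · intro e he f hf hne v hve hvf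
      rw [Finset.mem_coe] at he hf
      exact hne ((hEd_mem e he v hve).symm.trans (hEd_mem f hf v hvf))
    · intro v
      exact ⟨Ed v, Finset.mem_coe.mpr (hEd_self v).2, (hEd_self v).1⟩
  have hSsubM : Sf ⊆ Mf := by
    rw [hSfdef, hMfdef]
    refine Finset.union_subset (fun x hx => ?_) (fun x hx => ?_)
    · exact Finset.mem_union_left _ (Finset.mem_union_left _ hx)
    · refine Finset.mem_union_right _ ?_
      exact Finset.image_subset_image (Finset.Ico_subset_Ico le_rfl (by omega)) hx
  -- cardinality of Sf
  have hdisjLT : Disjoint ((Finset.range k).image (Lg n hn0))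
      ((Finset.Ico (2*k) (n-1)).image (Tg n hn0)) := by
    rw [Finset.disjoint_left]
    intro e heL heT
    obtain ⟨t, ht, rfl⟩ := Finset.mem_image.mp heL
    obtain ⟨i, hi, hei⟩ := Finset.mem_image.mp heT
    rw [Tg, Lg, Sym2.eq_iff] at hei
    rcases hei with ⟨h1, h2⟩ | ⟨h1, h2⟩ <;> simp at h1 h2
  have hcL : ((Finset.range k).image (Lg n hn0)).card = k := by
    have hinj : Set.InjOn (Lg n hn0) ↑(Finset.range k) := by
      intro t ht t' ht' heq
      rw [Finset.mem_coe, Finset.mem_range] at ht ht'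
      have h1 := (hLval t ht).1
      have h1' := (hLval t' ht').1
      have h2' := (hLval t' ht').2
      have hmem : (inl (fmk n hn0 (2*t)) : Fin n ⊕ Fin n) ∈ Lg n hn0 t' := by
        rw [← heq, Lg]; exact Sym2.mem_mk_left _ _
      rw [Lg, Sym2.mem_iff] at hmem
      rcases hmem with h | h
      · have hfv : fmk n hn0 (2*t) = fmk n hn0 (2*t') := by simpa using h
        have := congrArg Fin.val hfv
        rw [h1, h1'] at this
        omega
      · have hfv : fmk n hn0 (2*t) = fmk n hn0 (2*t'+1) := by simpa using h
        have := congrArg Fin.val hfv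
        rw [h1, h2'] at this
        omega
    rw [Finset.card_image_of_injOn hinj, Finset.card_range]
  have hcT : ((Finset.Ico (2*k) (n-1)).image (Tg n hn0)).card = (n-1) - 2*k := by
    have hinj : Set.InjOn (Tg n hn0) ↑(Finset.Ico (2*k) (n-1)) := by
      intro i hi i' hi' heq
      rw [Finset.mem_coe, Finset.mem_Ico] at hi hi'
      have hmem : (inl (fmk n hn0 i) : Fin n ⊕ Fin n) ∈ Tg n hn0 i' := by
        rw [← heq, Tg]; exact Sym2.mem_mk_left _ _
      rw [Tg, Sym2.mem_iff] at hmem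
      rcases hmem with h | h
      · have hfv : fmk n hn0 i = fmk n hn0 i' := by simpa using h
        have := congrArg Fin.val hfv
        rw [fmk_val hn0 (by omega), fmk_val hn0 (by omega)] at this
        exact this
      · simp at h
    rw [Finset.card_image_of_injOn hinj, Nat.card_Ico]
  have hcard : (↑Sf : Set (Sym2 (Fin n ⊕ Fin n))).ncard = n - k - 1 := by
    rw [Set.ncard_coe_finset, hSfdef, Finset.card_union_of_disjoint hdisjLT, hcL, hcT]
    omega
  -- forcing
  have hforce : ∀ M', IsPM (Hgraph n k) M' → (↑Sf : Set (Sym2 (Fin n ⊕ Fin n))) ⊆ M' →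
      M' = ↑Mf := by
    intro M' hM' hsub
    have hcovS_inl : ∀ a : Fin n, a.val < n - 1 →
        ∃ f ∈ Sf, (inl a : Fin n ⊕ Fin n) ∈ f := by
      intro a ha
      by_cases hlt : a.val < 2*k
      · refine ⟨Lg n hn0 (a.val/2), ?_, ?_⟩
        · rw [hSfdef]
          exact Finset.mem_union_left _
            (Finset.mem_image.mpr ⟨a.val/2, Finset.mem_range.mpr (by omega), rfl⟩)
        · rw [Lg, Sym2.mem_iff]
          have h1 : (fmk n hn0 (2*(a.val/2))).val = 2*(a.val/2) := fmk_val hn0 (by omega)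
          have h2 : (fmk n hn0 (2*(a.val/2)+1)).val = 2*(a.val/2)+1 := fmk_val hn0 (by omega)
          rcases Nat.even_or_odd a.val with he | ho
          · left; congr 1; apply Fin.ext; rw [h1]; obtain ⟨c, hc⟩ := he; omega
          · right; congr 1; apply Fin.ext; rw [h2]; obtain ⟨c, hc⟩ := ho; omega
      · refine ⟨Tg n hn0 a.val, ?_, ?_⟩
        · rw [hSfdef]
          exact Finset.mem_union_right _
            (Finset.mem_image.mpr ⟨a.val, Finset.mem_Ico.mpr ⟨by omega, ha⟩, rfl⟩)
        · rw [Tg, Sym2.mem_iff]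
          left; congr 1; apply Fin.ext; rw [fmk_val hn0 a.isLt]
    have hS_inr : ∀ f ∈ Sf, ∀ b : Fin n, (inr b : Fin n ⊕ Fin n) ∈ f →
        2*k ≤ b.val ∧ b.val < n-1 := by
      intro f hf b hbf
      rw [hSfdef, Finset.mem_union] at hf
      rcases hf with hf | hf
      · obtain ⟨t, ht, rfl⟩ := Finset.mem_image.mp hf
        rw [Lg, Sym2.mem_iff] at hbf
        rcases hbf with h | h <;> simp at h
      · obtain ⟨i, hi, rfl⟩ := Finset.mem_image.mp hf
        rw [Finset.mem_Ico] at hi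
        rw [Tg, Sym2.mem_iff] at hbf
        rcases hbf with h | h
        · simp at h
        · have hb : b = fmk n hn0 i := by simpa using h
          rw [hb, fmk_val hn0 (by omega)]
          exact ⟨hi.1, hi.2⟩
    have hlastval : (fmk n hn0 (n-1)).val = n-1 := fmk_val hn0 (by omega)
    have hstep1 : Tg n hn0 (n-1) ∈ M' := by
      obtain ⟨e, heM', hve⟩ := hM'.2.2 (inr (fmk n hn0 (n-1)))
      rcases edge_classify (hM'.1 heM') with ⟨a, b, rfl⟩ | ⟨t, ht, i, j, hi, hj, hc⟩
      · have hb : b = fmk n hn0 (n-1) := by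
          rw [Sym2.mem_iff] at hve
          rcases hve with h | h
          · simp at h
          · exact (by simpa using h : fmk n hn0 (n-1) = b).symm
        subst hb
        have han : a = fmk n hn0 (n-1) := by
          by_contra hne
          have hbound := a.isLt
          have haval : a.val < n - 1 := by
            rcases Nat.lt_or_ge a.val (n-1) with h | h
            · exact h
            · exact absurd (Fin.ext (by rw [hlastval]; omega)) hne
          obtain ⟨f, hfS, haf⟩ := hcovS_inl a haval
          have hfM' : f ∈ M' := hsub (Finset.mem_coe.mpr hfS)
          have heq := pm_unique hM' heM' hfM' (Sym2.mem_mk_left _ _) haf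
          have hlast_in_f : (inr (fmk n hn0 (n-1)) : Fin n ⊕ Fin n) ∈ f := by
            rw [← heq]; exact Sym2.mem_mk_right _ _
          have := (hS_inr f hfS _ hlast_in_f).2
          omega
        rw [han] at heM'
        rw [Tg]
        exact heM'
      · exfalso
        rcases hc with rfl | rfl
        · rw [Sym2.mem_iff] at hve
          rcases hve with h | h <;> simp at h
        · rw [Sym2.mem_iff] at hve
          rcases hve with h | h
          · have hfv : fmk n hn0 (n-1) = i := by simpa using h
            have := congrArg Fin.val hfv
            rw [hlastval] at this
            omega
          · have hfv : fmk n hn0 (n-1) = j := by simpa using h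
            have := congrArg Fin.val hfv
            rw [hlastval] at this
            omega
    have hstep2 : ∀ t, t < k → Rg n hn0 t ∈ M' := by
      intro t ht
      have h2t : (fmk n hn0 (2*t)).val = 2*t := (hLval t ht).1
      obtain ⟨e, heM', hve⟩ := hM'.2.2 (inr (fmk n hn0 (2*t)))
      rcases edge_classify (hM'.1 heM') with ⟨a, b, rfl⟩ | ⟨s, hs, i, j, hi, hj, hc⟩
      · exfalso
        have hb : b = fmk n hn0 (2*t) := by
          rw [Sym2.mem_iff] at hve
          rcases hve with h | h
          · simp at h
          · exact (by simpa using h : fmk n hn0 (2*t) = b).symm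
        subst hb
        by_cases haval : a.val < n-1
        · obtain ⟨f, hfS, haf⟩ := hcovS_inl a haval
          have hfM' : f ∈ M' := hsub (Finset.mem_coe.mpr hfS)
          have heq := pm_unique hM' heM' hfM' (Sym2.mem_mk_left _ _) haf
          have hin : (inr (fmk n hn0 (2*t)) : Fin n ⊕ Fin n) ∈ f := by
            rw [← heq]; exact Sym2.mem_mk_right _ _
          have := (hS_inr f hfS _ hin).1
          omega
        · have hbound := a.isLt
          have han : a = fmk n hn0 (n-1) := Fin.ext (by rw [hlastval]; omega)
          have heq := pm_unique hM' heM' hstep1 (v := inl a)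
            (Sym2.mem_mk_left _ _) (by rw [Tg, han]; exact Sym2.mem_mk_left _ _)
          have hin : (inr (fmk n hn0 (2*t)) : Fin n ⊕ Fin n) ∈ Tg n hn0 (n-1) := by
            rw [← heq]; exact Sym2.mem_mk_right _ _
          rw [Tg, Sym2.mem_iff] at hin
          rcases hin with h | h
          · simp at h
          · have hfv : fmk n hn0 (2*t) = fmk n hn0 (n-1) := by simpa using h
            have hv := congrArg Fin.val hfv
            rw [h2t, hlastval] at hv
            omega
      · rcases hc with rfl | rfl
        · exfalso
          rw [Sym2.mem_iff] at hve
          rcases hve with h | h <;> simp at h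
        · rw [Sym2.mem_iff] at hve
          rcases hve with h | h
          · have hiv : fmk n hn0 (2*t) = i := by simpa using h
            have hv := congrArg Fin.val hiv
            rw [h2t] at hv
            have hst : s = t := by omega
            subst hst
            have hj' : j = fmk n hn0 (2*s+1) := Fin.ext (by rw [(hLval s hs).2]; omega)
            rw [Rg, show fmk n hn0 (2*s) = i from hiv, ← hj']
            exact heM'
          · exfalso
            have hjv : fmk n hn0 (2*t) = j := by simpa using h
            have hv := congrArg Fin.val hjv
            rw [h2t, hj] at hv
            omega
    have hstep3 : (↑Mf : Set (Sym2 (Fin n ⊕ Fin n))) ⊆ M' := by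
      intro e he
      rw [Finset.mem_coe, hMfdef, Finset.mem_union, Finset.mem_union] at he
      rcases he with (he | he) | he
      · refine hsub (Finset.mem_coe.mpr ?_)
        rw [hSfdef]
        exact Finset.mem_union_left _ he
      · obtain ⟨t, ht, rfl⟩ := Finset.mem_image.mp he
        exact hstep2 t (Finset.mem_range.mp ht)
      · obtain ⟨i, hi, rfl⟩ := Finset.mem_image.mp he
        rw [Finset.mem_Ico] at hi
        by_cases hilast : i < n-1
        · refine hsub (Finset.mem_coe.mpr ?_)
          rw [hSfdef]
          exact Finset.mem_union_right _
            (Finset.mem_image.mpr ⟨i, Finset.mem_Ico.mpr ⟨hi.1, hilast⟩, rfl⟩)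
        · have : i = n-1 := by omega
          rw [this]
          exact hstep1
    apply Set.Subset.antisymm _ hstep3
    intro e heM'
    induction e using Sym2.ind with
    | _ x y =>
      obtain ⟨hx_in, hEdMf⟩ := hEd_self x
      have hEdM' : Ed x ∈ M' := hstep3 (Finset.mem_coe.mpr hEdMf)
      have heq := pm_unique hM' heM' hEdM' (Sym2.mem_mk_left _ _) hx_in
      rw [heq]
      exact Finset.mem_coe.mpr hEdMf
  exact ⟨↑Mf, hPM, ↑Sf, ⟨by exact_mod_cast hSsubM, hforce⟩, hcard⟩

end Dev5
/-- Lemma 5.6. -/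
theorem stmt13 (n k : ℕ) (hn : 1 ≤ n) (hk : k ≤ (n - 1) / 2) :
    minForcing (Hgraph n k) = n - k - 1 := by
  have hkn : 2*k + 1 ≤ n := by omega
  obtain ⟨M0', hPM0, S0, hFS0, hcard0⟩ := upper_main (by omega) hkn
  have hlow : ∀ M : Set (Sym2 (Fin n ⊕ Fin n)), IsPM (Hgraph n k) M →
      n - k - 1 ≤ forcingNum (Hgraph n k) M := by
    intro M hM
    have hne : {c | ∃ S, IsForcingSet (Hgraph n k) M S ∧ S.ncard = c}.Nonempty :=
      ⟨M.ncard, M, forcing_self hM, rfl⟩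
    refine le_csInf hne ?_
    rintro c ⟨S, hFS, rfl⟩
    exact lower_main hkn hM hFS
  have hupp : forcingNum (Hgraph n k) M0' ≤ n - k - 1 :=
    Nat.sInf_le ⟨S0, hFS0, hcard0⟩
  apply le_antisymm
  · exact le_trans (Nat.sInf_le ⟨M0', hPM0, rfl⟩) hupp
  · refine le_csInf ⟨forcingNum (Hgraph n k) M0', M0', hPM0, rfl⟩ ?_
    rintro c ⟨M, hM, rfl⟩
    exact hlow M hM
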